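/- Let θ_c' be the unique real root of t³ + t² + 3t − 1 = 0 and let 0 < θ < θ_c'. Then the two roots ξ₁ = (1 − 3θ² − √((θ−1)(θ³+θ²+3θ−1)))/(2θ²) and ξ₂ = (1 − 3θ² + √((θ−1)(θ³+θ²+3θ−1)))/(2θ²) of the quadratic θ³ξ² + θ(3θ² − 1)ξ + 2θ³ − 2θ + 1 = 0 satisfy 2 < ξ₁ < ξ₂. -/

import Mathlib

/-- If `θ_c'` is the unique real root of `t³ + t² + 3t - 1 = 0` and
`0 < θ < θ_c'`, then the two roots `ξ₁ ≤ ξ₂` of the quadratic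
`θ³ξ² + θ(3θ² - 1)ξ + 2θ³ - 2θ + 1 = 0` satisfy `2 < ξ₁ < ξ₂`. -/
theorem sos_xi_roots_gt_two (θc' θ : ℝ)
    (hroot : θc' ^ 3 + θc' ^ 2 + 3 * θc' - 1 = 0)
    (huniq : ∀ t : ℝ, t ^ 3 + t ^ 2 + 3 * t - 1 = 0 → t = θc')
    (hθ0 : 0 < θ) (hθ : θ < θc') :
    let ξ₁ : ℝ := (1 - 3 * θ ^ 2 - Real.sqrt ((θ - 1) * (θ ^ 3 + θ ^ 2 + 3 * θ - 1)))
        / (2 * θ ^ 2)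
    let ξ₂ : ℝ := (1 - 3 * θ ^ 2 + Real.sqrt ((θ - 1) * (θ ^ 3 + θ ^ 2 + 3 * θ - 1)))
        / (2 * θ ^ 2)
    (θ ^ 3 * ξ₁ ^ 2 + θ * (3 * θ ^ 2 - 1) * ξ₁ + 2 * θ ^ 3 - 2 * θ + 1 = 0) ∧
    (θ ^ 3 * ξ₂ ^ 2 + θ * (3 * θ ^ 2 - 1) * ξ₂ + 2 * θ ^ 3 - 2 * θ + 1 = 0) ∧
    2 < ξ₁ ∧ ξ₁ < ξ₂ := by
  intro ξ₁ ξ₂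
  have hθc0 : (0:ℝ) < θc' := lt_trans hθ0 hθ
  -- the cubic is strictly increasing, so it is negative at θ
  have hc : θ ^ 3 + θ ^ 2 + 3 * θ - 1 < 0 := by
    nlinarith [sq_nonneg (θ + θc'), sq_nonneg (θ - θc'), mul_pos hθ0 hθc0]
  have h3 : 3 * θ < 1 := by nlinarith [pow_pos hθ0 3, pow_pos hθ0 2]
  have hθ1 : θ < 1 := by linarith
  have hDpos : 0 < (θ - 1) * (θ ^ 3 + θ ^ 2 + 3 * θ - 1) :=
    mul_pos_of_neg_of_neg (by linarith) hc
  set s := Real.sqrt ((θ - 1) * (θ ^ 3 + θ ^ 2 + 3 * θ - 1)) with hsdef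
  have hs : s ^ 2 = (θ - 1) * (θ ^ 3 + θ ^ 2 + 3 * θ - 1) := Real.sq_sqrt hDpos.le
  have hs0 : 0 < s := Real.sqrt_pos.mpr hDpos
  have hθne : θ ≠ 0 := ne_of_gt hθ0
  have hξ1 : ξ₁ = (1 - 3 * θ ^ 2 - s) / (2 * θ ^ 2) := rfl
  have hξ2 : ξ₂ = (1 - 3 * θ ^ 2 + s) / (2 * θ ^ 2) := rfl
  refine ⟨?_, ?_, ?_, ?_⟩
  · rw [hξ1]; field_simp; linear_combination hs
  · rw [hξ2]; field_simp; linear_combination hs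
  · have h7 : 0 < 1 - 7 * θ ^ 2 := by nlinarith
    have hlt : s < 1 - 7 * θ ^ 2 := by
      nlinarith [hs, hs0, h7, mul_nonneg hθ0.le (sq_nonneg (3*θ-1)), sq_nonneg (3*θ-1)]
    rw [hξ1, lt_div_iff₀ (by positivity)]
    nlinarith
  · rw [hξ1, hξ2]
    have h2 : (0:ℝ) < 2 * θ ^ 2 := by positivity
    rw [div_lt_div_iff₀ h2 h2]
    nlinarith [hs0, h2]
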